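/- For any connected graph G and any graph H with v(G) ≥ s(H), the Ramsey number satisfies R(G,H) ≥ (v(G)−1)(χ(H)−1) + s(H). -/

import Mathlib

open SimpleGraph Finset

/-- `G` embeds into `H` (a copy of `G` appears in `H`). -/
def graphEmbeds {V W : Type*} (G : SimpleGraph V) (H : SimpleGraph W) : Prop :=
  ∃ f : V → W, Function.Injective f ∧ ∀ u v, G.Adj u v → H.Adj (f u) (f v)

/-- `N` is large enough for the Ramsey property: every red/blue coloring of `K_N`
(the red graph `R`, blue graph `Rᶜ`) contains a red `G` or a blue `H`. -/
def isRamsey {V W : Type*} (G : SimpleGraph V) (H : SimpleGraph W) (N : ℕ) : Prop :=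
  ∀ R : SimpleGraph (Fin N), graphEmbeds G R ∨ graphEmbeds H Rᶜ

/-- The Ramsey number `R(G,H)`. -/
noncomputable def ramsey {V W : Type*} (G : SimpleGraph V) (H : SimpleGraph W) : ℕ :=
  sInf {N | isRamsey G H N}

/-- `t` disjoint copies of the complete graph `K_m`. -/
def kCliques (t m : ℕ) : SimpleGraph (Fin t × Fin m) where
  Adj x y := x.1 = y.1 ∧ x.2 ≠ y.2
  symm := ⟨fun x y h => ⟨h.1.symm, h.2.symm⟩⟩
  loopless := ⟨fun x h => h.2 rfl⟩

/-- The chromatic number as a natural number. -/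
noncomputable def chromNum {V : Type*} (G : SimpleGraph V) : ℕ := sInf {n | G.Colorable n}

/-- The chromatic surplus: the minimum size of a color class over all proper
colorings with `chromNum G` colors. -/
noncomputable def surplus {V : Type*} [Fintype V] (G : SimpleGraph V) : ℕ :=
  sInf {k | ∃ C : G.Coloring (Fin (chromNum G)), ∃ i : Fin (chromNum G),
    (Finset.univ.filter (fun v => C v = i)).card = k}

/-- `a` is a leaf of `G`: it has a unique neighbor. -/
def IsLeaf {V : Type*} (G : SimpleGraph V) (a : V) : Prop := ∃! w, G.Adj a w

/-- Stretching: delete a leaf `b` and attach a new vertex (reusing the label `b`)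
to the leaf `a`. -/
def isStretch {V : Type*} (T T' : SimpleGraph V) : Prop :=
  ∃ a b : V, a ≠ b ∧ IsLeaf T a ∧ IsLeaf T b ∧
    ∀ x y, T'.Adj x y ↔
      ((T.Adj x y ∧ x ≠ b ∧ y ≠ b) ∨ (x = b ∧ y = a) ∨ (x = a ∧ y = b))

/-- Expanding at a vertex `u` of degree `d` (`2 ≤ d ≤ n-2`) all of whose neighbors
are leaves except `z0`: delete a leaf `b` outside `N[u]` and attach a new vertex
(reusing the label `b`) to `u`. -/
def isExpand {V : Type*} [Fintype V] (T T' : SimpleGraph V) : Prop :=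
  ∃ u b z0 : V, T.Adj u z0 ∧ ¬ IsLeaf T z0 ∧
    (∀ z, T.Adj u z → z ≠ z0 → IsLeaf T z) ∧
    2 ≤ (T.neighborSet u).ncard ∧ (T.neighborSet u).ncard ≤ Fintype.card V - 2 ∧
    IsLeaf T b ∧ b ≠ u ∧ ¬ T.Adj u b ∧
    ∀ x y, T'.Adj x y ↔
      ((T.Adj x y ∧ x ≠ b ∧ y ≠ b) ∨ (x = b ∧ y = u) ∨ (x = u ∧ y = b))

/-- Disjoint union of `K_m` and `K_l`. -/
def kUnion (m l : ℕ) : SimpleGraph (Fin m ⊕ Fin l) where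
  Adj x y := x ≠ y ∧ ((x.isLeft ∧ y.isLeft) ∨ (x.isRight ∧ y.isRight))
  symm := ⟨fun x y h => ⟨h.1.symm, h.2.imp (fun p => ⟨p.2, p.1⟩) (fun p => ⟨p.2, p.1⟩)⟩⟩
  loopless := ⟨fun x h => h.1 rfl⟩

/-- Disjoint union of `k` graphs, each on `Fin n`. -/
def disjUnion {k n : ℕ} (Fs : Fin k → SimpleGraph (Fin n)) :
    SimpleGraph (Fin k × Fin n) where
  Adj x y := x.1 = y.1 ∧ (Fs x.1).Adj x.2 y.2
  symm := ⟨by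
    rintro ⟨i, a⟩ ⟨j, b⟩ ⟨h1, h2⟩
    dsimp at h1 h2 ⊢
    subst h1
    exact ⟨rfl, h2.symm⟩⟩
  loopless := ⟨by
    rintro ⟨i, a⟩ ⟨h1, h2⟩
    exact (Fs i).irrefl h2⟩

/-- Disjoint union of graphs `Fs i` on `Fin (n i)`. -/
def sigmaUnion {r : ℕ} {n : Fin r → ℕ} (Fs : ∀ i, SimpleGraph (Fin (n i))) :
    SimpleGraph (Σ i, Fin (n i)) where
  Adj x y := ∃ (i : Fin r) (a b : Fin (n i)), x = ⟨i, a⟩ ∧ y = ⟨i, b⟩ ∧ (Fs i).Adj a b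
  symm := ⟨by
    rintro x y ⟨i, a, b, hx, hy, h⟩
    exact ⟨i, b, a, hy, hx, h.symm⟩⟩
  loopless := ⟨by
    rintro x ⟨i, a, b, hx, hy, h⟩
    rw [hx] at hy
    obtain ⟨-, hab⟩ := (Sigma.mk.inj_iff).mp hy
    exact (Fs i).irrefl (by cases eq_of_heq hab; exact h)⟩

section Aux

open SimpleGraph Finset

/-- Finite Ramsey theorem for cliques, in subset form. -/
private lemma cliqueRamsey (s : ℕ) : ∀ t : ℕ, ∃ N : ℕ,
    ∀ (n : ℕ) (R : SimpleGraph (Fin n)) (U : Finset (Fin n)), N ≤ U.card →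
      (∃ A ⊆ U, A.card = s ∧ R.IsClique ↑A) ∨ (∃ B ⊆ U, B.card = t ∧ Rᶜ.IsClique ↑B) := by
  classical
  induction s with
  | zero =>
    intro t
    exact ⟨0, fun n R U _ => Or.inl ⟨∅, empty_subset _, card_empty, by simp⟩⟩
  | succ s ihs =>
    intro t
    induction t with
    | zero => exact ⟨0, fun n R U _ => Or.inr ⟨∅, empty_subset _, card_empty, by simp⟩⟩
    | succ t iht =>
      obtain ⟨N1, h1⟩ := ihs (t + 1)
      obtain ⟨N2, h2⟩ := iht
      refine ⟨N1 + N2 + 1, fun n R U hU => ?_⟩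
      obtain ⟨v, hv⟩ : U.Nonempty := card_pos.mp (by omega)
      set A := (U.erase v).filter (fun x => R.Adj v x) with hAdef
      set B := (U.erase v).filter (fun x => ¬ R.Adj v x) with hBdef
      have hcard : A.card + B.card = (U.erase v).card :=
        card_filter_add_card_filter_not _
      have hec : (U.erase v).card = U.card - 1 := card_erase_of_mem hv
      by_cases hA1 : N1 ≤ A.card
      · rcases h1 n R A hA1 with ⟨A', hsub, hcardA, hclA⟩ | ⟨B', hsub, hcardB, hclB⟩
        · refine Or.inl ⟨insert v A', ?_, ?_, ?_⟩
          · exact insert_subset hv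
              (hsub.trans ((filter_subset _ _).trans (erase_subset _ _)))
          · have hvA : v ∉ A' := fun h => notMem_erase v U ((filter_subset _ _) (hsub h))
            rw [card_insert_of_notMem hvA, hcardA]
          · rw [coe_insert]
            refine hclA.insert (fun b hb _ => ?_)
            exact (mem_filter.mp (hsub (mem_coe.mp hb))).2
        · exact Or.inr ⟨B', hsub.trans ((filter_subset _ _).trans (erase_subset _ _)),
            hcardB, hclB⟩
      · have hB2 : N2 ≤ B.card := by omega
        rcases h2 n R B hB2 with ⟨A', hsub, hcardA, hclA⟩ | ⟨B', hsub, hcardB, hclB⟩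
        · exact Or.inl ⟨A', hsub.trans ((filter_subset _ _).trans (erase_subset _ _)),
            hcardA, hclA⟩
        · refine Or.inr ⟨insert v B', ?_, ?_, ?_⟩
          · exact insert_subset hv
              (hsub.trans ((filter_subset _ _).trans (erase_subset _ _)))
          · have hvB : v ∉ B' := fun h => notMem_erase v U ((filter_subset _ _) (hsub h))
            rw [card_insert_of_notMem hvB, hcardB]
          · rw [coe_insert]
            refine hclB.insert (fun b hb hne => ?_)
            have hbB := hsub (mem_coe.mp hb)
            exact (SimpleGraph.compl_adj _ _ _).mpr ⟨hne, (mem_filter.mp hbB).2⟩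

private lemma exists_isRamsey {V W : Type*} [Fintype V] [Fintype W]
    (G : SimpleGraph V) (H : SimpleGraph W) : ∃ N, isRamsey G H N := by
  obtain ⟨N, hN⟩ := cliqueRamsey (Fintype.card V) (Fintype.card W)
  refine ⟨N, fun R => ?_⟩
  rcases hN N R Finset.univ (by simp) with ⟨A, -, hcard, hcl⟩ | ⟨B, -, hcard, hcl⟩
  · left
    have e : V ≃ A := Fintype.equivOfCardEq (by rw [Fintype.card_coe, hcard])
    refine ⟨fun v => (e v : Fin N), fun a b h => e.injective (Subtype.ext h), ?_⟩
    intro u v huv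
    have hne : ((e u : Fin N)) ≠ (e v : Fin N) := fun h =>
      G.ne_of_adj huv (e.injective (Subtype.ext h))
    exact hcl (mem_coe.mpr (e u).2) (mem_coe.mpr (e v).2) hne
  · right
    have e : W ≃ B := Fintype.equivOfCardEq (by rw [Fintype.card_coe, hcard])
    refine ⟨fun v => (e v : Fin N), fun a b h => e.injective (Subtype.ext h), ?_⟩
    intro u v huv
    have hne : ((e u : Fin N)) ≠ (e v : Fin N) := fun h =>
      H.ne_of_adj huv (e.injective (Subtype.ext h))
    exact hcl (mem_coe.mpr (e u).2) (mem_coe.mpr (e v).2) hne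

private lemma chromNum_colorable {W : Type*} [Fintype W] (H : SimpleGraph W) :
    H.Colorable (chromNum H) :=
  Nat.sInf_mem (s := {n | H.Colorable n}) ⟨Fintype.card W, H.colorable_of_fintype⟩

private lemma surplus_of_chromNum_zero {W : Type*} [Fintype W] (H : SimpleGraph W)
    (h : chromNum H = 0) : surplus H = 0 := by
  have : {k | ∃ C : H.Coloring (Fin (chromNum H)), ∃ i : Fin (chromNum H),
      (Finset.univ.filter (fun v => C v = i)).card = k} = ∅ := by
    rw [Set.eq_empty_iff_forall_notMem]
    rintro k ⟨C, i, -⟩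
    exact absurd i.isLt (by omega)
  rw [surplus, this, Nat.sInf_empty]

private lemma surplus_pos {W : Type*} [Fintype W] (H : SimpleGraph W)
    (hχ : 1 ≤ chromNum H) : 1 ≤ surplus H := by
  by_contra hcon
  have hs0 : surplus H = 0 := by omega
  obtain ⟨C⟩ := chromNum_colorable H
  have hne : {k | ∃ C : H.Coloring (Fin (chromNum H)), ∃ i : Fin (chromNum H),
      (Finset.univ.filter (fun v => C v = i)).card = k}.Nonempty :=
    ⟨_, C, ⟨0, hχ⟩, rfl⟩
  obtain ⟨C0, i0, hcard⟩ := Nat.sInf_mem hne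
  rw [show sInf {k | ∃ C : H.Coloring (Fin (chromNum H)), ∃ i : Fin (chromNum H),
      (Finset.univ.filter (fun v => C v = i)).card = k} = surplus H from rfl, hs0] at hcard
  have hno : ∀ v, C0 v ≠ i0 := by
    intro v hvi
    have hv : v ∈ Finset.univ.filter (fun v => C0 v = i0) :=
      Finset.mem_filter.mpr ⟨Finset.mem_univ v, hvi⟩
    rw [Finset.card_eq_zero.mp hcard] at hv
    exact absurd hv (Finset.notMem_empty v)
  have C1 : H.Coloring {j : Fin (chromNum H) // j ≠ i0} :=
    SimpleGraph.Coloring.mk (fun v => ⟨C0 v, hno v⟩)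
      (fun {u v} hadj hEq => C0.valid hadj (congrArg Subtype.val hEq))
  have hcardsub : Fintype.card {j : Fin (chromNum H) // j ≠ i0} = chromNum H - 1 := by
    rw [Fintype.card_subtype_compl, Fintype.card_subtype_eq, Fintype.card_fin]
  have hcolor : H.Colorable (chromNum H - 1) := by
    have := C1.colorable
    rwa [hcardsub] at this
  exact Nat.notMem_of_lt_sInf (show chromNum H - 1 < chromNum H by omega) hcolor

end Aux

/-- Burr's lower bound: for a connected graph `G` and a graph `H` with
`v(G) ≥ s(H)`, `R(G,H) ≥ (v(G)-1)(χ(H)-1) + s(H)`. -/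
theorem stmt_0 {V W : Type*} [Fintype V] [Fintype W]
    (G : SimpleGraph V) (H : SimpleGraph W)
    (hG : G.Connected) (hs : surplus H ≤ Fintype.card V) :
    (Fintype.card V - 1) * (chromNum H - 1) + surplus H ≤ ramsey G H := by
  have hVne : Nonempty V := hG.nonempty
  rcases Nat.eq_zero_or_pos (chromNum H) with hχ0 | hχpos
  · rw [hχ0, surplus_of_chromNum_zero H hχ0]
    simp
  have hs1 : 1 ≤ surplus H := surplus_pos H hχpos
  have hWne : Nonempty W := by
    rcases isEmpty_or_nonempty W with hE | h
    · exfalso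
      have hc0 : H.Colorable 0 :=
        ⟨SimpleGraph.Coloring.mk (fun v => (IsEmpty.false v).elim)
          (fun {u v} _ => (IsEmpty.false u).elim)⟩
      have : chromNum H ≤ 0 := Nat.sInf_le hc0
      omega
    · exact h
  refine le_csInf (exists_isRamsey G H) ?_
  intro N hN
  by_contra hcon
  push_neg at hcon
  set n := Fintype.card V with hndef
  set χ := chromNum H with hχdef
  set s := surplus H with hsdef
  have hn1 : 1 ≤ n := Fintype.card_pos_iff.mpr hVne
  rcases Nat.eq_zero_or_pos N with h0 | hNpos
  · subst h0
    rcases hN ⊥ with ⟨f, -, -⟩ | ⟨g, -, -⟩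
    · exact (f (Classical.arbitrary V)).elim0
    · exact (g (Classical.arbitrary W)).elim0
  have hn2 : 2 ≤ n := by
    rcases Nat.lt_or_ge n 2 with h | h
    · exfalso
      have hn1' : n = 1 := by omega
      rw [hn1'] at hcon
      simp at hcon
      omega
    · exact h
  set m := n - 1 with hmdef
  have hmpos : 1 ≤ m := by omega
  have hlt' : N < (χ - 1) * m + s := by
    rw [mul_comm]
    exact hcon
  -- the coloring by blocks
  set c : Fin N → Fin χ := (fun i =>
    ⟨min (i.val / m) (χ - 1), lt_of_le_of_lt (min_le_right _ _) (by omega)⟩) with hcdef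
  set R : SimpleGraph (Fin N) :=
    { Adj := fun x y => x ≠ y ∧ c x = c y
      symm := ⟨fun x y h => ⟨h.1.symm, h.2.symm⟩⟩
      loopless := ⟨fun x h => h.1 rfl⟩ } with hRdef
  have hRadj : ∀ x y, R.Adj x y ↔ (x ≠ y ∧ c x = c y) := fun x y => Iff.rfl
  have hblock : ∀ (i : Fin N) (v : ℕ), v ≤ χ - 1 → (c i).val = v →
      v * m ≤ i.val ∧ i.val < v * m + m := by
    intro i v hv hci
    have hdm := Nat.div_add_mod i.val m
    have hmod := Nat.mod_lt i.val (show 0 < m by omega)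
    have hci' : min (i.val / m) (χ - 1) = v := hci
    rcases Nat.lt_or_ge (i.val / m) (χ - 1) with hq | hq
    · have hveq : i.val / m = v := by
        rw [min_eq_left (Nat.le_of_lt hq)] at hci'
        exact hci'
      rw [hveq] at hdm
      constructor
      · calc v * m = m * v := mul_comm _ _
          _ ≤ m * v + i.val % m := Nat.le_add_right _ _
          _ = i.val := hdm
      · calc i.val = m * v + i.val % m := hdm.symm
          _ < m * v + m := by omega
          _ = v * m + m := by rw [mul_comm]
    · have hveq : v = χ - 1 := by
        rw [min_eq_right hq] at hci'
        exact hci'.symm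
      subst hveq
      constructor
      · have h1 : m * (χ - 1) ≤ m * (i.val / m) := Nat.mul_le_mul_left m hq
        calc (χ - 1) * m = m * (χ - 1) := mul_comm _ _
          _ ≤ m * (i.val / m) := h1
          _ ≤ m * (i.val / m) + i.val % m := Nat.le_add_right _ _
          _ = i.val := hdm
      · have h2 : i.val < N := i.isLt
        have h3 : s ≤ m + 1 := by omega
        generalize hP : (χ - 1) * m = P at hlt' ⊢
        omega
  rcases hN R with ⟨f, finj, hadj⟩ | ⟨g, ginj, hadj⟩
  · -- red G: impossible since G connected and blocks have size ≤ m = n-1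
    obtain ⟨v0⟩ := hVne
    have hconst : ∀ u : V, c (f u) = c (f v0) := by
      intro u
      obtain ⟨p⟩ := hG.preconnected u v0
      induction p with
      | nil => rfl
      | cons h p ih => exact (((hRadj _ _).mp (hadj _ _ h)).2).trans ih
    set j := c (f v0) with hjdef
    have hj : (j : ℕ) ≤ χ - 1 := by
      have := j.isLt
      omega
    have hcard : (Finset.univ : Finset V).card ≤ (Finset.Ico (j.val * m) (j.val * m + m)).card := by
      apply Finset.card_le_card_of_injOn (fun u => (f u).val)
      · intro u _
        have hb := hblock (f u) j.val hj (by rw [hconst u])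
        exact Finset.mem_Ico.mpr hb
      · intro u _ v _ h
        exact finj (Fin.ext h)
    rw [Finset.card_univ, Nat.card_Ico] at hcard
    omega
  · -- blue H: gives a coloring with a small color class
    have hcol : ∀ u v, H.Adj u v → c (g u) ≠ c (g v) := by
      intro u v huv hEq
      have h := hadj u v huv
      rw [SimpleGraph.compl_adj] at h
      exact h.2 ((hRadj _ _).mpr ⟨h.1, hEq⟩)
    have hχlt : χ - 1 < χ := by omega
    set i : Fin χ := ⟨χ - 1, hχlt⟩ with hidef
    set C : H.Coloring (Fin χ) :=
      SimpleGraph.Coloring.mk (fun w => c (g w)) (fun {u v} h => hcol u v h) with hCdef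
    have hle : s ≤ (Finset.univ.filter (fun w => C w = i)).card :=
      Nat.sInf_le ⟨C, i, rfl⟩
    have hclass : (Finset.univ.filter (fun w => C w = i)).card ≤
        (Finset.Ico ((χ - 1) * m) N).card := by
      apply Finset.card_le_card_of_injOn (fun w => (g w).val)
      · intro w hw
        have hcw : C w = i := (Finset.mem_filter.mp hw).2
        have hval : (c (g w)).val = χ - 1 := by
          rw [show c (g w) = i from hcw]
        have hb := hblock (g w) (χ - 1) le_rfl hval
        exact Finset.mem_Ico.mpr ⟨hb.1, (g w).isLt⟩
      · intro u _ v _ h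
        exact ginj (Fin.ext h)
    rw [Nat.card_Ico] at hclass
    have hfinal : s ≤ N - (χ - 1) * m := le_trans hle hclass
    generalize hP : (χ - 1) * m = P at hfinal hlt'
    omega
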